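/- Let (G,κ) be a capacitated graph with κ(x) ≤ d_G(x) for all x, with Z = ∅ and X ∪ Z = X independent. If for every x ∈ X the auxiliary bipartite graph G^aux − x admits a matching saturating the side Y' = Y^κ, then (G,κ) has exactly one DP-Nash subgraph, namely (X, Y; E') where E' consists of all edges of G between X and Y. -/

import Mathlib

open Finset
open scoped Classical

noncomputable section

variable {V : Type*} [Fintype V]

/-- Degree of a vertex in a (simple) graph on a finite vertex set. -/
def deg (H : SimpleGraph V) (x : V) : ℕ :=
  (Finset.univ.filter fun y => H.Adj x y).card

/-- `(D, P; H)` is a DP-Nash subgraph of the capacitated graph `(G, κ)`: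
`H` is a spanning subgraph of `G`, bipartite with partite sets `D` and `P`,
no vertex of `P` is isolated in `H`, and every `x ∈ D` has
`H`-degree `min (d_G x) (κ x)`. -/
def IsDPNash (G : SimpleGraph V) (κ : V → ℕ) (D P : Finset V) (H : SimpleGraph V) : Prop :=
  H ≤ G ∧ D ∪ P = Finset.univ ∧ Disjoint D P ∧
    (∀ ⦃u v⦄, H.Adj u v → (u ∈ D ∧ v ∈ P) ∨ (u ∈ P ∧ v ∈ D)) ∧
    (∀ v ∈ P, 0 < deg H v) ∧
    (∀ x ∈ D, deg H x = min (deg G x) (κ x))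

/-- `X = {x : κ(x) = d_G(x)}`. -/
def XX (G : SimpleGraph V) (κ : V → ℕ) : Finset V :=
  Finset.univ.filter fun x => κ x = deg G x

/-- `Y = N(X) \ X`. -/
def YY (G : SimpleGraph V) (κ : V → ℕ) : Finset V :=
  Finset.univ.filter fun y => y ∉ XX G κ ∧ ∃ x ∈ XX G κ, G.Adj x y

/-- `Z = V \ (X ∪ Y)`. -/
def ZZ (G : SimpleGraph V) (κ : V → ℕ) : Finset V :=
  Finset.univ \ (XX G κ ∪ YY G κ)

/-- `Y^{κ>0} = {y ∈ Y : κ(y) > 0}`. -/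
def Ypos (G : SimpleGraph V) (κ : V → ℕ) : Finset V :=
  (YY G κ).filter fun y => 0 < κ y

/-- The neighbours of `x` in `G` lying in `W`. -/
def nbrW (G : SimpleGraph V) (x : V) (W : Finset V) : Finset V :=
  Finset.univ.filter fun y => G.Adj x y ∧ y ∈ W

/-- `L(W) = {x ∈ X ∪ Z : |N_G(x) ∩ W| > d_G(x) - κ(x)}`. -/
def LL (G : SimpleGraph V) (κ : V → ℕ) (W : Finset V) : Finset V :=
  (XX G κ ∪ ZZ G κ).filter fun x => deg G x - κ x < (nbrW G x W).card

/-- If `Z = ∅`, `X` is independent and for every `x ∈ X` the auxiliary graph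
`G^aux - x` has a matching saturating `Y^κ`, then `(G,κ)` has exactly one
DP-Nash subgraph, namely `(X, Y; E')` where `E'` is all edges of `G` between
`X` and `Y`. -/
theorem stmt12 (G : SimpleGraph V) (κ : V → ℕ) (hκ : ∀ v, κ v ≤ deg G v)
    (hedge : ∀ u v, G.Adj u v → 0 < κ u ∨ 0 < κ v)
    (hZ : ZZ G κ = ∅)
    (hind : ∀ u ∈ XX G κ, ∀ v ∈ XX G κ, ¬ G.Adj u v)
    (hmatch : ∀ x ∈ XX G κ, ∃ f : V × ℕ → V,
      Set.InjOn f {p : V × ℕ | p.1 ∈ YY G κ ∧ p.2 < κ p.1} ∧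
      ∀ p : V × ℕ, p.1 ∈ YY G κ → p.2 < κ p.1 →
        f p ∈ XX G κ ∧ f p ≠ x ∧ G.Adj p.1 (f p))
    (H₀ : SimpleGraph V)
    (hH₀ : ∀ u v, H₀.Adj u v ↔ G.Adj u v ∧
      ((u ∈ XX G κ ∧ v ∈ YY G κ) ∨ (u ∈ YY G κ ∧ v ∈ XX G κ))) :
    IsDPNash G κ (XX G κ) (YY G κ) H₀ ∧
      ∀ (D P : Finset V) (H : SimpleGraph V),
        IsDPNash G κ D P H → D = XX G κ ∧ P = YY G κ ∧ H = H₀ := by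
  classical
  have hXmem : ∀ x, x ∈ XX G κ ↔ κ x = deg G x := by
    intro x; simp [XX]
  have hYmem : ∀ y, y ∈ YY G κ ↔ y ∉ XX G κ ∧ ∃ x ∈ XX G κ, G.Adj x y := by
    intro y; simp [YY]
  have huniv : ∀ v : V, v ∈ XX G κ ∪ YY G κ := by
    intro v
    by_contra hv
    have : v ∈ ZZ G κ := by simp only [ZZ, Finset.mem_sdiff]; exact ⟨Finset.mem_univ v, hv⟩
    rw [hZ] at this
    exact absurd this (Finset.notMem_empty v)
  have hdisjXY : Disjoint (XX G κ) (YY G κ) := by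
    rw [Finset.disjoint_left]
    intro a haX haY
    exact ((hYmem a).1 haY).1 haX
  have hnbrX : ∀ x ∈ XX G κ, ∀ v, G.Adj x v → v ∈ YY G κ := by
    intro x hx v hadj
    exact (hYmem v).2 ⟨fun hvX => hind x hx v hvX hadj, x, hx, hadj⟩
  have hH₀X : ∀ x ∈ XX G κ, ∀ v, H₀.Adj x v ↔ G.Adj x v := by
    intro x hx v
    rw [hH₀]
    exact ⟨fun h => h.1, fun h => ⟨h, Or.inl ⟨hx, hnbrX x hx v h⟩⟩⟩
  have hdegH₀X : ∀ x ∈ XX G κ, deg H₀ x = deg G x := by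
    intro x hx
    unfold deg
    congr 1
    apply Finset.filter_congr
    intro v _
    exact hH₀X x hx v
  constructor
  · refine ⟨?_, ?_, hdisjXY, ?_, ?_, ?_⟩
    · intro u v h; exact ((hH₀ u v).1 h).1
    · apply Finset.eq_univ_of_forall huniv
    · intro u v h; exact ((hH₀ u v).1 h).2
    · intro y hy
      obtain ⟨_, x, hx, hadj⟩ := (hYmem y).1 hy
      have hyx : H₀.Adj y x := (hH₀ y x).2 ⟨hadj.symm, Or.inr ⟨hy, hx⟩⟩
      unfold deg
      rw [Finset.card_pos]
      exact ⟨x, by simpa using hyx⟩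
    · intro x hx
      have hκx := (hXmem x).1 hx
      rw [hdegH₀X x hx, hκx, min_self]
  · intro D P H hDP
    obtain ⟨hle, hcover, hdisj, hbip, hPdeg, hDdeg⟩ := hDP
    have hle' : ∀ ⦃u v : V⦄, H.Adj u v → G.Adj u v := fun u v h => hle h
    have hDorP : ∀ v : V, v ∈ D ∨ v ∈ P := fun v =>
      Finset.mem_union.1 (hcover ▸ Finset.mem_univ v)
    -- Step 1: vertices of X ∩ D use all their G-edges in H
    have hfull : ∀ x, x ∈ XX G κ → x ∈ D → ∀ v, G.Adj x v → H.Adj x v := by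
      intro x hx hxD v hadj
      have hκx := (hXmem x).1 hx
      have hdH : deg H x = deg G x := by
        have h := hDdeg x hxD
        rw [hκx, min_self] at h
        exact h
      have hsub : (Finset.univ.filter fun w => H.Adj x w) ⊆
          (Finset.univ.filter fun w => G.Adj x w) := by
        intro w hw
        simp only [Finset.mem_filter, Finset.mem_univ, true_and] at hw ⊢
        exact hle' hw
      have heq := Finset.eq_of_subset_of_card_le hsub (le_of_eq hdH.symm)
      have hv : v ∈ Finset.univ.filter fun w => G.Adj x w := by
        simp [hadj]
      rw [← heq] at hv
      simpa using hv
    -- Step 2: neighbours of X ∩ D are in P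
    have hAtoP : ∀ x, x ∈ XX G κ → x ∈ D → ∀ v, G.Adj x v → v ∈ P := by
      intro x hx hxD v hadj
      rcases hbip (hfull x hx hxD v hadj) with ⟨_, hvP⟩ | ⟨hxP, _⟩
      · exact hvP
      · exact absurd hxP (Finset.disjoint_left.1 hdisj hxD)
    -- Step 3: X ⊆ D
    have hXD : ∀ x ∈ XX G κ, x ∈ D := by
      intro x₀ hx₀
      by_contra hx₀D
      have hx₀P : x₀ ∈ P := (hDorP x₀).resolve_left hx₀D
      obtain ⟨f, hfinj, hf⟩ := hmatch x₀ hx₀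
      set B := XX G κ ∩ P with hB
      set C := YY G κ ∩ D with hC
      have hg : ∀ x, x ∈ B → ∃ y, y ∈ C ∧ H.Adj x y := by
        intro x hxB
        rw [hB, Finset.mem_inter] at hxB
        have hpos := hPdeg x hxB.2
        unfold deg at hpos
        rw [Finset.card_pos] at hpos
        obtain ⟨y, hy⟩ := hpos
        simp only [Finset.mem_filter, Finset.mem_univ, true_and] at hy
        have hyD : y ∈ D := by
          rcases hbip hy with ⟨hxD, _⟩ | ⟨_, hyD⟩
          · exact absurd hxD (Finset.disjoint_right.1 hdisj hxB.2)
          · exact hyD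
        have hyY : y ∈ YY G κ := hnbrX x hxB.1 y (hle' hy)
        exact ⟨y, Finset.mem_inter.2 ⟨hyY, hyD⟩, hy⟩
      choose! g hgC hgadj using hg
      set T := ((B ×ˢ C).filter fun p => H.Adj p.1 p.2) with hT
      have h1 : B.card ≤ T.card := by
        apply Finset.card_le_card_of_injOn (fun x => (x, g x))
        · intro x hx
          rw [hT, Finset.mem_coe, Finset.mem_filter, Finset.mem_product]
          exact ⟨⟨hx, hgC x hx⟩, hgadj x hx⟩
        · intro a _ b _ hab
          exact congrArg Prod.fst hab
      have h2 : T.card = ∑ y ∈ C, (T.filter fun p => p.2 = y).card := by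
        apply Finset.card_eq_sum_card_fiberwise
        intro p hp
        rw [hT, Finset.mem_coe, Finset.mem_filter, Finset.mem_product] at hp
        exact hp.1.2
      have h3 : ∀ y ∈ C, (T.filter fun p => p.2 = y).card ≤ κ y := by
        intro y hyC
        have hyD : y ∈ D := (Finset.mem_inter.1 hyC).2
        have hdeg := hDdeg y hyD
        have hfib : (T.filter fun p => p.2 = y).card ≤
            (Finset.univ.filter fun v => H.Adj y v).card := by
          apply Finset.card_le_card_of_injOn (fun p => p.1)
          · intro p hp
            simp only [hT, Finset.mem_coe, Finset.mem_filter, Finset.mem_product] at hp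
            simp only [Finset.mem_coe, Finset.mem_filter, Finset.mem_univ, true_and]
            exact (hp.2 ▸ hp.1.2).symm
          · intro a ha b hb hab
            simp only [Finset.mem_coe, hT, Finset.mem_filter] at ha hb
            exact Prod.ext hab (ha.2.trans hb.2.symm)
        calc (T.filter fun p => p.2 = y).card ≤ deg H y := hfib
          _ = min (deg G y) (κ y) := hdeg
          _ ≤ κ y := min_le_right _ _
      have h4 : ∑ y ∈ C, κ y ≤ (B.erase x₀).card := by
        have hcard : ∑ y ∈ C, κ y = (C.sigma fun y => Finset.range (κ y)).card := by
          rw [Finset.card_sigma]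
          simp
        rw [hcard]
        apply Finset.card_le_card_of_injOn (fun σ => f (σ.1, σ.2))
        · intro σ hσ
          rw [Finset.mem_coe, Finset.mem_sigma] at hσ
          have hyY : σ.1 ∈ YY G κ := (Finset.mem_inter.1 hσ.1).1
          have hyD : σ.1 ∈ D := (Finset.mem_inter.1 hσ.1).2
          have hlt : σ.2 < κ σ.1 := Finset.mem_range.1 hσ.2
          obtain ⟨hfX, hfne, hfadj⟩ := hf (σ.1, σ.2) hyY hlt
          have hfP : f (σ.1, σ.2) ∈ P := by
            by_contra hP
            have hfD : f (σ.1, σ.2) ∈ D := (hDorP _).resolve_right hP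
            have := hAtoP _ hfX hfD σ.1 hfadj.symm
            exact absurd hyD (Finset.disjoint_right.1 hdisj this)
          exact Finset.mem_erase.2 ⟨hfne, Finset.mem_inter.2 ⟨hfX, hfP⟩⟩
        · intro a ha b hb hab
          simp only [Finset.mem_coe, Finset.mem_sigma] at ha hb
          have ha' : ((a.1 : V), (a.2 : ℕ)) ∈ {p : V × ℕ | p.1 ∈ YY G κ ∧ p.2 < κ p.1} :=
            ⟨(Finset.mem_inter.1 ha.1).1, Finset.mem_range.1 ha.2⟩
          have hb' : ((b.1 : V), (b.2 : ℕ)) ∈ {p : V × ℕ | p.1 ∈ YY G κ ∧ p.2 < κ p.1} :=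
            ⟨(Finset.mem_inter.1 hb.1).1, Finset.mem_range.1 hb.2⟩
          have heq := hfinj ha' hb' hab
          exact Sigma.ext (congrArg Prod.fst heq) (heq_of_eq (congrArg Prod.snd heq))
      have h5 : (B.erase x₀).card < B.card :=
        Finset.card_erase_lt_of_mem (Finset.mem_inter.2 ⟨hx₀, hx₀P⟩)
      have chain : B.card < B.card :=
        lt_of_le_of_lt (h1.trans (h2 ▸ ((Finset.sum_le_sum h3).trans h4))) h5
      exact absurd chain (lt_irrefl _)
    -- Step 4: Y ⊆ P
    have hYP : ∀ y ∈ YY G κ, y ∈ P := by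
      intro y hy
      obtain ⟨_, x, hx, hadj⟩ := (hYmem y).1 hy
      exact hAtoP x hx (hXD x hx) y hadj
    have hDX : D = XX G κ := by
      apply Finset.Subset.antisymm
      · intro v hvD
        rcases Finset.mem_union.1 (huniv v) with h | h
        · exact h
        · exact absurd (hYP v h) (Finset.disjoint_left.1 hdisj hvD)
      · intro x hx
        exact hXD x hx
    have hPY : P = YY G κ := by
      apply Finset.Subset.antisymm
      · intro v hvP
        rcases Finset.mem_union.1 (huniv v) with h | h
        · exact absurd hvP (Finset.disjoint_left.1 hdisj (hXD v h))
        · exact h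
      · intro y hy
        exact hYP y hy
    refine ⟨hDX, hPY, ?_⟩
    have key : ∀ x ∈ XX G κ, ∀ v, H.Adj x v ↔ H₀.Adj x v := by
      intro x hx v
      rw [hH₀X x hx v]
      exact ⟨fun h => hle' h, fun h => hfull x hx (hXD x hx) v h⟩
    ext u v
    by_cases hu : u ∈ XX G κ
    · exact key u hu v
    by_cases hv : v ∈ XX G κ
    · rw [H.adj_comm, H₀.adj_comm]
      exact key v hv u
    · constructor
      · intro h
        rcases hbip h with ⟨huD, _⟩ | ⟨_, hvD⟩
        · exact absurd (hDX ▸ huD) hu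
        · exact absurd (hDX ▸ hvD) hv
      · intro h
        rcases ((hH₀ u v).1 h).2 with ⟨huX, _⟩ | ⟨_, hvX⟩
        · exact absurd huX hu
        · exact absurd hvX hv
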